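/- Let 𝒢 be a GRN with associated PRN ℛ. A node τ ∈ V is an appendage node of 𝒢 if and only if both (τ,R) and (τ,P) are appendage nodes of ℛ. -/

import Mathlib

open List Relation

/- In the PRN on `V × Bool`, the node `(v, false)` is the mRNA node `v^R`
   and `(v, true)` is the protein node `v^P`. -/

/-- Arrow relation of the PRN associated to a GRN with arrow relation `E`:
arrows `(v,R) → (v,P)` for every `v`, and `(u,P) → (v,R)` whenever `E u v`. -/
def prnAdj {V : Type*} (E : V → V → Prop) : V × Bool → V × Bool → Prop :=
  fun a b =>
    (a.1 = b.1 ∧ a.2 = false ∧ b.2 = true) ∨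
    (E a.1 b.1 ∧ a.2 = true ∧ b.2 = false)

/-- The lift of a path `σ₁ → ⋯ → σ_m` in the GRN to the path
`(σ₁,R) → (σ₁,P) → ⋯ → (σ_m,R) → (σ_m,P)` in the PRN. -/
def liftPath {V : Type*} (l : List V) : List (V × Bool) :=
  l.flatMap fun v => [(v, false), (v, true)]

/-- A simple path: a nonempty directed path visiting each node at most once. -/
def IsSimplePath {V : Type*} (E : V → V → Prop) (l : List V) : Prop :=
  l ≠ [] ∧ l.Chain' E ∧ l.Nodup

/-- A simple path from `a` to `b`. -/
def IsSimplePathFrom {V : Type*} (E : V → V → Prop) (a b : V) (l : List V) : Prop :=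
  IsSimplePath E l ∧ l.head? = some a ∧ l.getLast? = some b

/-- A node is simple if it lies on some simple path from the input to the output. -/
def IsSimpleNode {V : Type*} (E : V → V → Prop) (ι o v : V) : Prop :=
  ∃ l, IsSimplePathFrom E ι o l ∧ v ∈ l

/-- A node is super-simple if it lies on every simple path from the input to the output. -/
def IsSuperSimpleNode {V : Type*} (E : V → V → Prop) (ι o v : V) : Prop :=
  ∀ l, IsSimplePathFrom E ι o l → v ∈ l

/-- A node is appendage if it lies on no simple path from the input to the output. -/
def IsAppendageNode {V : Type*} (E : V → V → Prop) (ι o v : V) : Prop :=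
  ¬ IsSimpleNode E ι o v

/-- An appendage path from `a` to `b`: a simple path from `a` to `b` each of whose
nodes, except possibly `a` and `b`, is an appendage node. -/
def IsAppendagePath {V : Type*} (E : V → V → Prop) (ι o a b : V) (l : List V) : Prop :=
  IsSimplePathFrom E a b l ∧ ∀ v ∈ l, v ≠ a → v ≠ b → IsAppendageNode E ι o v

/-- A directed cycle: a nonempty closed directed walk visiting each of its nodes
exactly once (a self-loop is a cycle of length one). -/
def IsCycle {V : Type*} (E : V → V → Prop) (c : List V) : Prop :=
  c ≠ [] ∧ c.Chain' E ∧ c.Nodup ∧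
    ∃ a b, c.head? = some a ∧ c.getLast? = some b ∧ E b a

/-- Arrow relation of the appendage subnetwork: the induced subgraph on appendage nodes. -/
def appendageAdj {V : Type*} (E : V → V → Prop) (ι o : V) : V → V → Prop :=
  fun a b => E a b ∧ IsAppendageNode E ι o a ∧ IsAppendageNode E ι o b

/-- Two appendage nodes are path-equivalent if each is reachable from the other by a
directed path lying entirely within the appendage subnetwork. -/
def PathEquiv {V : Type*} (E : V → V → Prop) (ι o a b : V) : Prop :=
  Relation.ReflTransGen (appendageAdj E ι o) a b ∧
  Relation.ReflTransGen (appendageAdj E ι o) b a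

/-- A node `x` is between `a` and `b` if some input-to-output simple path visits
`a`, `x`, `b` in that order. -/
def Between {V : Type*} (E : V → V → Prop) (ι o a x b : V) : Prop :=
  ∃ l, IsSimplePathFrom E ι o l ∧ [a, x, b].Sublist l

section Aux

variable {V : Type*} {E : V → V → Prop}

lemma liftPath_nil : liftPath ([] : List V) = [] := rfl

lemma liftPath_cons (v : V) (l : List V) :
    liftPath (v :: l) = (v, false) :: (v, true) :: liftPath l := rfl

lemma mem_liftPath (v : V) (b : Bool) (l : List V) :
    (v, b) ∈ liftPath l ↔ v ∈ l := by
  simp only [liftPath, List.mem_flatMap, List.mem_cons, List.mem_singleton, Prod.mk.injEq,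
    List.not_mem_nil, or_false]
  cases b <;> aesop

lemma liftPath_head? (l : List V) :
    (liftPath l).head? = l.head?.map (fun v => (v, false)) := by
  cases l <;> rfl

lemma liftPath_getLast? (l : List V) :
    (liftPath l).getLast? = l.getLast?.map (fun v => (v, true)) := by
  induction l with
  | nil => rfl
  | cons v l ih =>
    cases l with
    | nil => rfl
    | cons w l' =>
      rw [liftPath_cons, liftPath_cons, List.getLast?_cons_cons, List.getLast?_cons_cons,
        ← liftPath_cons, ih, List.getLast?_cons_cons]

lemma liftPath_chain' {l : List V} (h : l.Chain' E) :
    (liftPath l).Chain' (prnAdj E) := by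
  induction l with
  | nil => simp [liftPath_nil, List.Chain']
  | cons v l ih =>
    cases l with
    | nil => simp [liftPath_cons, liftPath_nil, prnAdj, List.Chain']
    | cons w l' =>
      simp only [List.Chain', List.isChain_cons_cons] at h
      rw [liftPath_cons, liftPath_cons]
      refine List.IsChain.cons_cons (Or.inl ⟨rfl, rfl, rfl⟩)
        (List.IsChain.cons_cons (Or.inr ⟨h.1, rfl, rfl⟩) ?_)
      rw [← liftPath_cons]
      exact ih h.2

lemma liftPath_nodup {l : List V} (h : l.Nodup) : (liftPath l).Nodup := by
  induction l with
  | nil => simp [liftPath_nil]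
  | cons v l ih =>
    rw [List.nodup_cons] at h
    rw [liftPath_cons]
    refine List.nodup_cons.2 ⟨?_, List.nodup_cons.2 ⟨?_, ih h.2⟩⟩
    · simp [mem_liftPath, h.1]
    · rw [mem_liftPath]; exact h.1

lemma unliftPath : ∀ (L : List (V × Bool)), L.Chain' (prnAdj E) →
    (∀ a ∈ L.head?, a.2 = false) → (∀ b ∈ L.getLast?, b.2 = true) →
    ∃ l : List V, L = liftPath l := by
  have key : ∀ n (L : List (V × Bool)), L.length ≤ n → L.Chain' (prnAdj E) →
      (∀ a ∈ L.head?, a.2 = false) → (∀ b ∈ L.getLast?, b.2 = true) →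
      ∃ l : List V, L = liftPath l := by
    intro n
    induction n with
    | zero =>
      intro L hL _ _ _
      rw [Nat.le_zero, List.length_eq_zero_iff] at hL
      exact ⟨[], by simp [hL, liftPath_nil]⟩
    | succ n ih =>
      intro L hlen hc hh hl
      match L with
      | [] => exact ⟨[], rfl⟩
      | (v, b) :: rest =>
        have hb : b = false := hh (v, b) rfl
        subst hb
        match rest with
        | [] =>
          have := hl (v, false) rfl
          simp at this
        | r :: rest' =>
          have hvr : prnAdj E (v, false) r := (List.isChain_cons_cons.1 hc).1
          have hr : r = (v, true) := by
            rcases hvr with ⟨h1, _, h3⟩ | ⟨_, h2, _⟩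
            · exact Prod.ext h1.symm h3
            · simp at h2
          subst hr
          match rest' with
          | [] => exact ⟨[v], rfl⟩
          | s :: rest'' =>
            have hvs : prnAdj E (v, true) s := (List.isChain_cons_cons.1 (List.isChain_cons_cons.1 hc).2).1
            have hs2 : s.2 = false := by
              rcases hvs with ⟨_, h2, _⟩ | ⟨_, _, h3⟩
              · simp at h2
              · exact h3
            have hlen' : (s :: rest'').length ≤ n := by
              simp only [List.length_cons] at hlen ⊢; omega
            obtain ⟨l', hl'⟩ := ih (s :: rest'') hlen'
              ((List.isChain_cons_cons.1 (List.isChain_cons_cons.1 hc).2).2)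
              (by intro a ha; simp at ha; subst ha; exact hs2)
              (by intro b hb; exact hl b hb)
            exact ⟨v :: l', by rw [liftPath_cons, hl']⟩
  exact fun L => key L.length L le_rfl

lemma chain'_of_liftPath {l : List V} (h : (liftPath l).Chain' (prnAdj E)) :
    l.Chain' E := by
  induction l with
  | nil => simp [List.Chain']
  | cons v l ih =>
    cases l with
    | nil => simp [List.Chain']
    | cons w l' =>
      simp only [liftPath_cons, List.Chain', List.isChain_cons_cons] at h
      refine List.isChain_cons_cons.2 ⟨?_, ih ?_⟩
      · rcases h.2.1 with ⟨_, h2, _⟩ | ⟨h1, _, _⟩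
        · simp at h2
        · exact h1
      · simp only [liftPath_cons, List.Chain', List.isChain_cons_cons]
        exact h.2.2
  
lemma nodup_of_liftPath {l : List V} (h : (liftPath l).Nodup) : l.Nodup := by
  have hsub : ∀ l : List V, (l.map fun v => (v, false)).Sublist (liftPath l) := by
    intro l
    induction l with
    | nil => simp [liftPath_nil]
    | cons v l ih =>
      rw [liftPath_cons, List.map_cons]
      exact (ih.cons _).cons₂ _
  exact ((hsub l).nodup h).of_map _

lemma simple_corr {ι o : V} (L : List (V × Bool))
    (h : IsSimplePathFrom (prnAdj E) (ι, false) (o, true) L) :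
    ∃ l, IsSimplePathFrom E ι o l ∧ L = liftPath l := by
  obtain ⟨⟨hne, hch, hnd⟩, hh, hl⟩ := h
  obtain ⟨l, rfl⟩ := unliftPath L hch
    (fun a ha => by rw [hh, Option.mem_some_iff] at ha; rw [← ha])
    (fun b hb => by rw [hl, Option.mem_some_iff] at hb; rw [← hb])
  refine ⟨l, ⟨⟨?_, chain'_of_liftPath hch, nodup_of_liftPath hnd⟩, ?_, ?_⟩, rfl⟩
  · rintro rfl; exact hne rfl
  · rw [liftPath_head?, Option.map_eq_some_iff] at hh
    obtain ⟨x, hx, hx2⟩ := hh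
    have : x = ι := by simpa using hx2
    subst this; exact hx
  · rw [liftPath_getLast?, Option.map_eq_some_iff] at hl
    obtain ⟨x, hx, hx2⟩ := hl
    have : x = o := by simpa using hx2
    subst this; exact hx

lemma lift_simple {ι o : V} {l : List V} (h : IsSimplePathFrom E ι o l) :
    IsSimplePathFrom (prnAdj E) (ι, false) (o, true) (liftPath l) := by
  obtain ⟨⟨hne, hch, hnd⟩, hh, hl⟩ := h
  refine ⟨⟨?_, liftPath_chain' hch, liftPath_nodup hnd⟩, ?_, ?_⟩
  · cases l with
    | nil => exact absurd rfl hne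
    | cons v l' => simp [liftPath_cons]
  · rw [liftPath_head?, hh]; rfl
  · rw [liftPath_getLast?, hl]; rfl

lemma simple_node_iff {ι o τ : V} (b : Bool) :
    IsSimpleNode (prnAdj E) (ι, false) (o, true) (τ, b) ↔ IsSimpleNode E ι o τ := by
  constructor
  · rintro ⟨L, hL, hmem⟩
    obtain ⟨l, hl, rfl⟩ := simple_corr L hL
    exact ⟨l, hl, (mem_liftPath τ b l).1 hmem⟩
  · rintro ⟨l, hl, hmem⟩
    exact ⟨liftPath l, lift_simple hl, (mem_liftPath τ b l).2 hmem⟩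

end Aux

/-- A node `τ` is an appendage node of the GRN if and only if both
`(τ,R)` and `(τ,P)` are appendage nodes of the PRN. -/
theorem stmt_6 {V : Type*} [Fintype V] (E : V → V → Prop) (ι o τ : V) :
    IsAppendageNode E ι o τ ↔
      (IsAppendageNode (prnAdj E) (ι, false) (o, true) (τ, false) ∧
       IsAppendageNode (prnAdj E) (ι, false) (o, true) (τ, true)) := by
  unfold IsAppendageNode
  rw [simple_node_iff false, simple_node_iff true]
  tauto
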